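/- For every t ∈ [0,1), the operators α_t and γ_t on ℓ²(ℕ×ℤ) satisfy: α_t γ_t = t γ_t α_t, α_t γ_t* = t γ_t* α_t, γ_t γ_t* = γ_t* γ_t, α_t* α_t + γ_t* γ_t = 1, and α_t α_t* + t² γ_t γ_t* = 1. -/

import Mathlib

/-- `ℓ²(ℕ×ℤ)`: the Hilbert space of square-summable complex families indexed by `ℕ × ℤ`. -/
noncomputable abbrev l2NZ : Type := lp (fun _ : ℕ × ℤ => ℂ) 2

/-- The standard orthonormal basis vectors `e_{n,k}` of `ℓ²(ℕ×ℤ)`. -/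
noncomputable def eNZ (n : ℕ) (k : ℤ) : l2NZ := lp.single 2 (n, k) (1 : ℂ)

/-- The defining property of the operators `α_t, γ_t` on `ℓ²(ℕ×ℤ)`:
`α_t e_{n,k} = √(1−t^{2n}) e_{n−1,k−1}` for `n ≥ 1`, `α_t e_{0,k} = 0`, and
`γ_t e_{n,k} = tⁿ e_{n,k−1}` (with the convention `0⁰ = 1`, so at `t = 0` this reads
`α₀ e_{n,k} = e_{n−1,k−1}` for `n ≥ 1`, `α₀ e_{0,k} = 0`, `γ₀ e_{0,k} = e_{0,k−1}`,
`γ₀ e_{n,k} = 0` for `n ≥ 1`). -/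
def IsAlphaGamma (t : ℝ) (α γ : l2NZ →L[ℂ] l2NZ) : Prop :=
  (∀ (n : ℕ) (k : ℤ),
    α (eNZ (n + 1) k) = (Real.sqrt (1 - t ^ (2 * (n + 1))) : ℂ) • eNZ n (k - 1)) ∧
  (∀ k : ℤ, α (eNZ 0 k) = 0) ∧
  (∀ (n : ℕ) (k : ℤ), γ (eNZ n k) = ((t ^ n : ℝ) : ℂ) • eNZ n (k - 1))

noncomputable def bNZ : HilbertBasis (ℕ × ℤ) ℂ l2NZ := default

local notation "⟪" x ", " y "⟫" => @inner ℂ _ _ x y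

lemma bNZ_apply (i : ℕ × ℤ) : bNZ i = eNZ i.1 i.2 := by
  rw [eNZ, ← bNZ.repr_symm_single]
  rfl

lemma inner_eNZ (n m : ℕ) (k l : ℤ) :
    ⟪eNZ n k, eNZ m l⟫ = if n = m ∧ k = l then (1 : ℂ) else 0 := by
  classical
  rw [eNZ, eNZ, lp.inner_single_left]
  by_cases hc : n = m ∧ k = l
  · obtain ⟨rfl, rfl⟩ := hc
    rw [lp.single_apply_self]
    simp
  · have hne : ((n : ℕ), k) ≠ (m, l) := by
      simp only [Ne, Prod.mk.injEq]; tauto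
    rw [lp.single_apply_ne _ _ _ hne]
    simp [hc]

lemma clm_ext {f g : l2NZ →L[ℂ] l2NZ}
    (hfg : ∀ n k, f (eNZ n k) = g (eNZ n k)) : f = g := by
  refine ContinuousLinearMap.ext_on (s := Set.range bNZ) ?_ ?_
  · rw [Submodule.dense_iff_topologicalClosure_eq_top]
    exact bNZ.dense_span
  · rintro x ⟨i, rfl⟩
    rw [bNZ_apply]
    exact hfg i.1 i.2

lemma vec_ext {x y : l2NZ}
    (hxy : ∀ n k, ⟪eNZ n k, x⟫ = ⟪eNZ n k, y⟫) : x = y := by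
  apply bNZ.repr.injective
  ext i
  rw [bNZ.repr_apply_apply, bNZ.repr_apply_apply, bNZ_apply]
  exact hxy i.1 i.2

open ContinuousLinearMap in
lemma adj_gamma {t : ℝ} {γ : l2NZ →L[ℂ] l2NZ}
    (hγ : ∀ (n : ℕ) (k : ℤ), γ (eNZ n k) = ((t ^ n : ℝ) : ℂ) • eNZ n (k - 1))
    (n : ℕ) (k : ℤ) :
    adjoint γ (eNZ n k) = ((t ^ n : ℝ) : ℂ) • eNZ n (k + 1) := by
  apply vec_ext
  intro m l
  rw [adjoint_inner_right, hγ m l, inner_smul_left, inner_smul_right,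
    inner_eNZ, inner_eNZ, Complex.conj_ofReal]
  by_cases hm : m = n
  · subst hm
    by_cases hl : l = k + 1
    · have h1 : l - 1 = k := by omega
      simp [hl, h1]
    · have h1 : ¬(l - 1 = k) := by omega
      simp [hl, h1]
  · simp [hm]

open ContinuousLinearMap in
lemma adj_alpha {t : ℝ} {α : l2NZ →L[ℂ] l2NZ}
    (hα : ∀ (n : ℕ) (k : ℤ),
      α (eNZ (n + 1) k) = (Real.sqrt (1 - t ^ (2 * (n + 1))) : ℂ) • eNZ n (k - 1))
    (hα0 : ∀ k : ℤ, α (eNZ 0 k) = 0)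
    (n : ℕ) (k : ℤ) :
    adjoint α (eNZ n k)
      = (Real.sqrt (1 - t ^ (2 * (n + 1))) : ℂ) • eNZ (n + 1) (k + 1) := by
  apply vec_ext
  intro m l
  rw [adjoint_inner_right, inner_smul_right, inner_eNZ]
  cases m with
  | zero =>
    have : ¬((0 : ℕ) = n + 1 ∧ l = k + 1) := by omega
    simp [hα0 l, this]
  | succ m' =>
    rw [hα m' l, inner_smul_left, inner_eNZ, Complex.conj_ofReal]
    by_cases hm : m' = n
    · subst hm
      by_cases hl : l = k + 1
      · have h1 : l - 1 = k := by omega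
        simp [hl, h1]
      · have h1 : ¬(l - 1 = k) := by omega
        simp [hl, h1]
    · have h1 : ¬(m' + 1 = n + 1) := by omega
      simp [hm, h1]

open ContinuousLinearMap in
/-- **Statement 8.** For `t ∈ [0,1)`, the operators `α_t, γ_t` satisfy
`α_t γ_t = t γ_t α_t`, `α_t γ_t* = t γ_t* α_t`, `γ_t γ_t* = γ_t* γ_t`,
`α_t* α_t + γ_t* γ_t = 1`, and `α_t α_t* + t² γ_t γ_t* = 1`. -/
theorem alphaGamma_relations (t : ℝ) (ht0 : 0 ≤ t) (ht1 : t < 1)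
    (α γ : l2NZ →L[ℂ] l2NZ) (h : IsAlphaGamma t α γ) :
    α * γ = (t : ℂ) • (γ * α) ∧
    α * adjoint γ = (t : ℂ) • (adjoint γ * α) ∧
    γ * adjoint γ = adjoint γ * γ ∧
    adjoint α * α + adjoint γ * γ = 1 ∧
    α * adjoint α + ((t : ℂ) ^ 2) • (γ * adjoint γ) = 1 := by
  obtain ⟨hα, hα0, hγ⟩ := h
  have hγ' := adj_gamma hγ
  have hα' := adj_alpha hα hα0
  have hpow : ∀ n : ℕ, 0 ≤ 1 - t ^ (2 * (n + 1)) := by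
    intro n
    have : t ^ (2 * (n + 1)) ≤ 1 := pow_le_one₀ ht0 ht1.le
    linarith
  refine ⟨?_, ?_, ?_, ?_, ?_⟩
  · apply clm_ext
    intro n k
    cases n with
    | zero =>
      rw [smul_apply]
      simp [mul_apply_eq_comp, smul_apply, hγ, hα0, map_smul]
    | succ n =>
      simp only [mul_apply_eq_comp, smul_apply, hγ, hα, map_smul, smul_smul]
      congr 1
      push_cast
      ring
  · apply clm_ext
    intro n k
    cases n with
    | zero =>
      rw [smul_apply]
      simp [mul_apply_eq_comp, smul_apply, hγ', hα0, map_smul]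
    | succ n =>
      simp only [mul_apply_eq_comp, smul_apply, hγ', hα, map_smul, smul_smul]
      have h1 : k + 1 - 1 = k := by omega
      have h2 : k - 1 + 1 = k := by omega
      rw [h1, h2]
      congr 1
      push_cast
      ring
  · apply clm_ext
    intro n k
    simp only [mul_apply_eq_comp, hγ, hγ', map_smul, smul_smul]
    have h1 : k + 1 - 1 = k := by omega
    have h2 : k - 1 + 1 = k := by omega
    rw [h1, h2]
  · apply clm_ext
    intro n k
    cases n with
    | zero =>
      simp [mul_apply, add_apply, one_apply, hα0, hγ, hγ', map_smul]
    | succ n =>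
      simp only [mul_apply_eq_comp, add_apply, one_apply_eq_self, hα, hγ, hα', hγ', map_smul, smul_smul]
      have h1 : (k - 1) + 1 = k := by omega
      rw [h1, ← add_smul]
      have h2 : (Real.sqrt (1 - t ^ (2 * (n + 1))) : ℂ)
          * (Real.sqrt (1 - t ^ (2 * (n + 1))) : ℂ)
          + ((t ^ (n + 1) : ℝ) : ℂ) * ((t ^ (n + 1) : ℝ) : ℂ) = 1 := by
        rw [← Complex.ofReal_mul, ← Complex.ofReal_mul,
          Real.mul_self_sqrt (hpow n), ← Complex.ofReal_add]
        norm_cast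
        have key : t ^ (n + 1) * t ^ (n + 1) = t ^ (2 * (n + 1)) := by
          rw [← pow_add]
          congr 1
          ring
        rw [key]
        ring
      rw [h2, one_smul]
  · apply clm_ext
    intro n k
    simp only [mul_apply_eq_comp, add_apply, smul_apply, one_apply_eq_self, hα, hα', hγ, hγ', map_smul,
      smul_smul]
    have h1 : (k + 1) - 1 = k := by omega
    rw [h1, ← add_smul]
    have h2 : (Real.sqrt (1 - t ^ (2 * (n + 1))) : ℂ)
        * (Real.sqrt (1 - t ^ (2 * (n + 1))) : ℂ)
        + (t : ℂ) ^ 2 * (((t ^ n : ℝ) : ℂ) * ((t ^ n : ℝ) : ℂ)) = 1 := by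
      rw [← Complex.ofReal_mul, Real.mul_self_sqrt (hpow n)]
      norm_cast
      have key : t ^ 2 * (t ^ n * t ^ n) = t ^ (2 * (n + 1)) := by
        rw [← pow_add, ← pow_add]
        congr 1
        ring
      rw [key]
      ring
    rw [h2, one_smul]
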